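/- (Theorem 1: consistency of weighting estimators that track a representer.) Under the sampling model, let f ∈ L²(P_Z) and let γ* ∈ L²(P_Z) satisfy ψ = ∫ γ*(z) f(z) dP_Z(z). Suppose that for each n there are real random variables γ̂_{n,1}, …, γ̂_{n,n} on (Ω, P) such that (1/n)·Σ_{i=1}^n (γ̂_{n,i} − γ*(Z_i))² converges to 0 in probability as n → ∞. Then the linear estimator ψ̂_n := (1/n)·Σ_{i=1}^n γ̂_{n,i} Y_i converges to ψ in probability. -/

import Mathlib

open MeasureTheory ProbabilityTheory Filter Topology

lemma aux_integrable_mul {α : Type*} [MeasurableSpace α] {μ : Measure α} {f g : α → ℝ}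
    (hf : MemLp f 2 μ) (hg : MemLp g 2 μ) : Integrable (fun x => f x * g x) μ := by
  have h := (((hf.add hg).integrable_sq).sub hf.integrable_sq).sub hg.integrable_sq
  have h2 := (h.const_mul (2⁻¹ : ℝ))
  apply h2.congr
  filter_upwards with x
  simp only [Pi.sub_apply, Pi.add_apply]
  ring


lemma aux_mean {Ω 𝒵 : Type*} [MeasurableSpace Ω] [MeasurableSpace 𝒵]
    (P : Measure Ω) [IsProbabilityMeasure P]
    (Z0 : Ω → 𝒵) (hZ0 : Measurable Z0) (Y0 : Ω → ℝ) (hY2 : MemLp Y0 2 P)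
    (γ' f : 𝒵 → ℝ) (hγ'm : Measurable γ')
    (hfm : AEStronglyMeasurable f (P.map Z0))
    (hfreg : (fun ω => f (Z0 ω)) =ᵐ[P] P[Y0 | MeasurableSpace.comap Z0 inferInstance])
    (hint : Integrable ((fun ω => γ' (Z0 ω)) * Y0) P) :
    ∫ ω, γ' (Z0 ω) * Y0 ω ∂P = ∫ z, γ' z * f z ∂(P.map Z0) := by
  have hm : MeasurableSpace.comap Z0 inferInstance ≤ _ := hZ0.comap_le
  haveI : SigmaFinite (P.trim hm) := by
    have : IsFiniteMeasure (P.trim hm) := isFiniteMeasure_trim hm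
    infer_instance
  have hZ0m : @Measurable Ω 𝒵 (MeasurableSpace.comap Z0 inferInstance) _ Z0 :=
    fun s hs => ⟨s, hs, rfl⟩
  have hGm : StronglyMeasurable[MeasurableSpace.comap Z0 inferInstance]
      (fun ω => γ' (Z0 ω)) := (hγ'm.comp hZ0m).stronglyMeasurable
  have hY0int : Integrable Y0 P := hY2.integrable one_le_two
  have hCE := condExp_mul_of_stronglyMeasurable_left hGm hint hY0int
  have h1 : ∫ ω, γ' (Z0 ω) * Y0 ω ∂P
      = ∫ ω, (P[(fun ω => γ' (Z0 ω)) * Y0 | MeasurableSpace.comap Z0 inferInstance]) ω ∂P :=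
    (integral_condExp hm).symm
  rw [h1]
  have h2 : ∫ ω, (P[(fun ω => γ' (Z0 ω)) * Y0 | MeasurableSpace.comap Z0 inferInstance]) ω ∂P
      = ∫ ω, γ' (Z0 ω) * f (Z0 ω) ∂P := by
    refine integral_congr_ae ?_
    filter_upwards [hCE, hfreg] with ω h1' h2'
    rw [h1']
    simp only [Pi.mul_apply]
    rw [← h2']
  rw [h2, integral_map hZ0.aemeasurable]
  exact hγ'm.stronglyMeasurable.aestronglyMeasurable.mul hfm

theorem minimax_linear_consistency
    {Ω 𝒵 : Type*} [MeasurableSpace Ω] [MeasurableSpace 𝒵]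
    (P : Measure Ω) [IsProbabilityMeasure P]
    (Z : ℕ → Ω → 𝒵) (Y : ℕ → Ω → ℝ)
    (hZmeas : ∀ i, Measurable (Z i)) (hYmeas : ∀ i, Measurable (Y i))
    (hindep : iIndepFun (fun i ω => (Z i ω, Y i ω)) P)
    (hident : ∀ i, IdentDistrib (fun ω => (Z i ω, Y i ω)) (fun ω => (Z 0 ω, Y 0 ω)) P P)
    (hY2 : MemLp (Y 0) 2 P)
    (f : 𝒵 → ℝ)
    (hfreg : (fun ω => f (Z 0 ω)) =ᵐ[P] P[Y 0 | MeasurableSpace.comap (Z 0) inferInstance])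
    (σ2 : 𝒵 → ℝ) (σbar2 : ℝ)
    (hσ2 : (fun ω => σ2 (Z 0 ω)) =ᵐ[P]
      P[fun ω => (Y 0 ω - f (Z 0 ω)) ^ 2 | MeasurableSpace.comap (Z 0) inferInstance])
    (hσbd : ∀ᵐ z ∂(P.map (Z 0)), σ2 z ≤ σbar2)
    (hfL2 : MemLp f 2 (P.map (Z 0)))
    (γstar : 𝒵 → ℝ) (hγL2 : MemLp γstar 2 (P.map (Z 0)))
    (ψ : ℝ) (hψ : ψ = ∫ z, γstar z * f z ∂(P.map (Z 0)))
    (γhat : ℕ → ℕ → Ω → ℝ)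
    (hγhat : TendstoInMeasure P
      (fun (n : ℕ) ω => (1 / (n : ℝ)) * ∑ i ∈ Finset.range n, (γhat n i ω - γstar (Z i ω)) ^ 2)
      atTop (fun _ => 0)) :
    TendstoInMeasure P
      (fun (n : ℕ) ω => (1 / (n : ℝ)) * ∑ i ∈ Finset.range n, γhat n i ω * Y i ω)
      atTop (fun _ => ψ) := by
  -- measurable version of γstar
  set γ' : 𝒵 → ℝ := hγL2.1.mk γstar with hγ'def
  have hγ'sm : StronglyMeasurable γ' := hγL2.1.stronglyMeasurable_mk
  have hγ'm : Measurable γ' := hγ'sm.measurable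
  have hγ'eq : γstar =ᵐ[P.map (Z 0)] γ' := hγL2.1.ae_eq_mk
  have hγ'L2 : MemLp γ' 2 (P.map (Z 0)) := hγL2.ae_eq hγ'eq
  -- map equality
  have hmapZ : ∀ i, P.map (Z i) = P.map (Z 0) := fun i =>
    ((hident i).comp measurable_fst).map_eq
  have hpull : ∀ i, (fun ω => γstar (Z i ω)) =ᵐ[P] (fun ω => γ' (Z i ω)) := by
    intro i
    have h := ae_eq_comp (μ := P) (hZmeas i).aemeasurable ((hmapZ i).symm ▸ hγ'eq)
    exact h
  -- the W sequence
  set g : 𝒵 × ℝ → ℝ := fun p => γ' p.1 * p.2 with hgdef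
  have hgm : Measurable g := (hγ'm.comp measurable_fst).mul measurable_snd
  set W : ℕ → Ω → ℝ := fun i ω => γ' (Z i ω) * Y i ω with hWdef
  have hWindep : Pairwise (Function.onFun (IndepFun · · P) W) := by
    have h := hindep.comp (fun _ => g) (fun _ => hgm)
    exact fun i j hij => h.indepFun hij
  have hWid : ∀ i, IdentDistrib (W i) (W 0) P P := fun i => (hident i).comp hgm
  -- memℒp of γ' ∘ Z 0
  have hγ'Z0 : MemLp (fun ω => γ' (Z 0 ω)) 2 P := by
    have := (memLp_map_measure_iff (p := 2) hγ'sm.aestronglyMeasurable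
      (hZmeas 0).aemeasurable).mp hγ'L2
    exact this
  have hWint : Integrable (W 0) P := aux_integrable_mul hγ'Z0 hY2
  -- the mean of W 0 is ψ
  have hmean : ∫ ω, W 0 ω ∂P = ψ := by
    have h := aux_mean P (Z 0) (hZmeas 0) (Y 0) hY2 γ' f hγ'm hfL2.1 hfreg hWint
    rw [hψ]
    rw [h]
    refine integral_congr_ae ?_
    filter_upwards [hγ'eq] with z hz
    rw [hz]
  -- LLN for W
  have hLLNW : ∀ᵐ ω ∂P, Tendsto
      (fun n : ℕ => (1 / (n : ℝ)) * ∑ i ∈ Finset.range n, W i ω) atTop (𝓝 ψ) := by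
    have h := strong_law_ae W hWint hWindep hWid
    rw [hmean] at h
    filter_upwards [h] with ω hω
    simpa [smul_eq_mul, one_div] using hω
  -- LLN for Y²
  set q : ℝ := ∫ ω, (Y 0 ω) ^ 2 ∂P with hqdef
  have hLLNQ : ∀ᵐ ω ∂P, Tendsto
      (fun n : ℕ => (1 / (n : ℝ)) * ∑ i ∈ Finset.range n, (Y i ω) ^ 2) atTop (𝓝 q) := by
    have hg2 : Measurable (fun p : 𝒵 × ℝ => p.2 ^ 2) := measurable_snd.pow_const 2
    have hind : Pairwise (Function.onFun (IndepFun · · P) (fun i ω => (Y i ω) ^ 2)) := by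
      have h := hindep.comp (fun _ => fun p : 𝒵 × ℝ => p.2 ^ 2) (fun _ => hg2)
      exact fun i j hij => h.indepFun hij
    have hid : ∀ i, IdentDistrib (fun ω => (Y i ω) ^ 2) (fun ω => (Y 0 ω) ^ 2) P P :=
      fun i => (hident i).comp hg2
    have h := strong_law_ae (fun i ω => (Y i ω) ^ 2) hY2.integrable_sq hind hid
    filter_upwards [h] with ω hω
    simpa [smul_eq_mul, one_div] using hω
  -- measurability of partial sums
  have hSmeas : ∀ n : ℕ, AEStronglyMeasurable
      (fun ω => (1 / (n : ℝ)) * ∑ i ∈ Finset.range n, W i ω) P := by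
    intro n
    refine (Measurable.const_mul ?_ _).aestronglyMeasurable
    exact Finset.measurable_sum _ (fun i _ => (hγ'm.comp (hZmeas i)).mul (hYmeas i))
  have hQmeas : ∀ n : ℕ, AEStronglyMeasurable
      (fun ω => (1 / (n : ℝ)) * ∑ i ∈ Finset.range n, (Y i ω) ^ 2) P := by
    intro n
    refine (Measurable.const_mul ?_ _).aestronglyMeasurable
    exact Finset.measurable_sum _ (fun i _ => (hYmeas i).pow_const 2)
  have hS : TendstoInMeasure P
      (fun (n : ℕ) ω => (1 / (n : ℝ)) * ∑ i ∈ Finset.range n, W i ω) atTop (fun _ => ψ) :=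
    tendstoInMeasure_of_tendsto_ae hSmeas hLLNW
  have hQ : TendstoInMeasure P
      (fun (n : ℕ) ω => (1 / (n : ℝ)) * ∑ i ∈ Finset.range n, (Y i ω) ^ 2) atTop (fun _ => q) :=
    tendstoInMeasure_of_tendsto_ae hQmeas hLLNQ
  -- transfer hγhat to γ'
  have hγhat' : TendstoInMeasure P
      (fun (n : ℕ) ω => (1 / (n : ℝ)) * ∑ i ∈ Finset.range n, (γhat n i ω - γ' (Z i ω)) ^ 2)
      atTop (fun _ => 0) := by
    refine TendstoInMeasure.congr (fun n => ?_) (EventuallyEq.refl _ _) hγhat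
    have hall : ∀ᵐ ω ∂P, ∀ i, γstar (Z i ω) = γ' (Z i ω) := ae_all_iff.mpr (fun i => hpull i)
    filter_upwards [hall] with ω hω
    simp only [hω]
  -- final epsilon argument
  rw [tendstoInMeasure_iff_dist]
  intro ε hε
  have hq0 : (0:ℝ) ≤ q := integral_nonneg (fun ω => sq_nonneg _)
  set M : ℝ := q + 1 with hMdef
  have hM : 0 < M := by positivity
  set t : ℝ := ε ^ 2 / (4 * M) with htdef
  have ht : 0 < t := by positivity
  -- the inclusion
  have hsub : ∀ n : ℕ,
      {ω | ε ≤ dist ((1 / (n : ℝ)) * ∑ i ∈ Finset.range n, γhat n i ω * Y i ω) ψ} ⊆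
      {ω | ε / 2 ≤ dist ((1 / (n : ℝ)) * ∑ i ∈ Finset.range n, W i ω) ψ} ∪
      ({ω | t ≤ dist ((1 / (n : ℝ)) * ∑ i ∈ Finset.range n, (γhat n i ω - γ' (Z i ω)) ^ 2) 0} ∪
       {ω | 1 ≤ dist ((1 / (n : ℝ)) * ∑ i ∈ Finset.range n, (Y i ω) ^ 2) q}) := by
    intro n ω hω
    by_contra hcon
    simp only [Set.mem_union, Set.mem_setOf_eq, not_or, not_le] at hcon
    obtain ⟨h1, h2, h3⟩ := hcon
    simp only [Set.mem_setOf_eq, Real.dist_eq] at hω h1 h2 h3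
    set B : ℝ := (1 / (n : ℝ)) * ∑ i ∈ Finset.range n, (γhat n i ω - γ' (Z i ω)) ^ 2 with hBdef
    set Q : ℝ := (1 / (n : ℝ)) * ∑ i ∈ Finset.range n, (Y i ω) ^ 2 with hQdef
    set S : ℝ := (1 / (n : ℝ)) * ∑ i ∈ Finset.range n, W i ω with hSdef
    set R : ℝ := (1 / (n : ℝ)) * ∑ i ∈ Finset.range n, (γhat n i ω - γ' (Z i ω)) * Y i ω
      with hRdef
    have hB0 : 0 ≤ B := by
      apply mul_nonneg (by positivity)
      exact Finset.sum_nonneg (fun i _ => sq_nonneg _)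
    have hQ0 : 0 ≤ Q := by
      apply mul_nonneg (by positivity)
      exact Finset.sum_nonneg (fun i _ => sq_nonneg _)
    rw [sub_zero, abs_of_nonneg hB0] at h2
    have hQlt : Q < M := by
      have := abs_lt.mp h3
      simp only [hMdef]
      linarith [this.2]
    -- Cauchy-Schwarz
    have hCS := Finset.sum_mul_sq_le_sq_mul_sq (Finset.range n)
      (fun i => γhat n i ω - γ' (Z i ω)) (fun i => Y i ω)
    have hn0 : (0:ℝ) ≤ 1 / (n:ℝ) := by positivity
    have hR2 : R ^ 2 ≤ B * Q := by
      calc R ^ 2 = (1 / (n:ℝ)) ^ 2 * (∑ i ∈ Finset.range n,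
            (γhat n i ω - γ' (Z i ω)) * Y i ω) ^ 2 := by rw [hRdef]; ring
        _ ≤ (1 / (n:ℝ)) ^ 2 * ((∑ i ∈ Finset.range n, (γhat n i ω - γ' (Z i ω)) ^ 2) *
            ∑ i ∈ Finset.range n, (Y i ω) ^ 2) := by
            exact mul_le_mul_of_nonneg_left hCS (by positivity)
        _ = B * Q := by rw [hBdef, hQdef]; ring
    have hBQ : B * Q < t * M := by
      rcases eq_or_lt_of_le hB0 with hB | hB
      · rw [← hB]; simpa using mul_pos ht hM
      · calc B * Q ≤ B * M := mul_le_mul_of_nonneg_left hQlt.le hB0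
          _ < t * M := mul_lt_mul_of_pos_right h2 hM
    have htM : t * M = (ε / 2) ^ 2 := by
      rw [htdef]; field_simp; ring
    have hR2lt : R ^ 2 < (ε / 2) ^ 2 := htM ▸ lt_of_le_of_lt hR2 hBQ
    have hRlt : |R| < ε / 2 := abs_lt_of_sq_lt_sq hR2lt (by positivity)
    have hdecomp : (1 / (n : ℝ)) * ∑ i ∈ Finset.range n, γhat n i ω * Y i ω = S + R := by
      rw [hSdef, hRdef, ← mul_add, ← Finset.sum_add_distrib]
      congr 1
      apply Finset.sum_congr rfl
      intro i _
      simp only [hWdef]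
      ring
    rw [hdecomp] at hω
    have : |S + R - ψ| ≤ |S - ψ| + |R| := by
      calc |S + R - ψ| = |(S - ψ) + R| := by ring_nf
        _ ≤ |S - ψ| + |R| := abs_add_le _ _
    linarith [hω, this, h1, hRlt]
  -- combine the three convergences
  have h1 := tendstoInMeasure_iff_dist.mp hS (ε / 2) (by positivity)
  have h2 := tendstoInMeasure_iff_dist.mp hγhat' t ht
  have h3 := tendstoInMeasure_iff_dist.mp hQ 1 one_pos
  have hbound : ∀ n : ℕ,
      P {ω | ε ≤ dist ((1 / (n : ℝ)) * ∑ i ∈ Finset.range n, γhat n i ω * Y i ω) ψ} ≤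
      P {ω | ε / 2 ≤ dist ((1 / (n : ℝ)) * ∑ i ∈ Finset.range n, W i ω) ψ} +
      (P {ω | t ≤ dist ((1 / (n : ℝ)) * ∑ i ∈ Finset.range n,
          (γhat n i ω - γ' (Z i ω)) ^ 2) 0} +
       P {ω | 1 ≤ dist ((1 / (n : ℝ)) * ∑ i ∈ Finset.range n, (Y i ω) ^ 2) q}) := by
    intro n
    refine le_trans (measure_mono (hsub n)) ?_
    exact le_trans (measure_union_le _ _) (by gcongr; exact measure_union_le _ _)
  have hzero : Tendsto (fun n : ℕ =>
      P {ω | ε / 2 ≤ dist ((1 / (n : ℝ)) * ∑ i ∈ Finset.range n, W i ω) ψ} +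
      (P {ω | t ≤ dist ((1 / (n : ℝ)) * ∑ i ∈ Finset.range n,
          (γhat n i ω - γ' (Z i ω)) ^ 2) 0} +
       P {ω | 1 ≤ dist ((1 / (n : ℝ)) * ∑ i ∈ Finset.range n, (Y i ω) ^ 2) q}))
      atTop (𝓝 0) := by
    have := h1.add (h2.add h3)
    simpa using this
  refine tendsto_of_tendsto_of_tendsto_of_le_of_le tendsto_const_nhds hzero
    (fun n => zero_le) hbound
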